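/- Suppose a queue satisfies: (i) whenever Q(t) ≤ H(t) the update is Q(t+1) = Q(t) + R(t) with R(t) ≤ A_max, and whenever Q(t) > H(t) then Q(t+1) ≤ Q(t) (no admission); (ii) H(t) ≤ B + A_max for all t, where B := Vαφ; and (iii) Q(0) = 0. Then Q(t) ≤ B + 2·A_max for all t ≥ 0. -/
import Mathlib


theorem stmt_7 (Q H R : ℕ → ℝ) (Amax B : ℝ)
    (hB : 0 ≤ B) (hAmax : 0 ≤ Amax)
    (hadmit : ∀ t, Q t ≤ H t → Q (t + 1) = Q t + R t)
    (hRle : ∀ t, R t ≤ Amax)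
    (hdeny : ∀ t, Q t > H t → Q (t + 1) ≤ Q t)
    (hH : ∀ t, H t ≤ B + Amax)
    (h0 : Q 0 = 0) :
    ∀ t, Q t ≤ B + 2 * Amax := by
  intro t
  induction t with
  | zero => rw [h0]; linarith
  | succ n ih =>
    by_cases h : Q n ≤ H n
    · have := hadmit n h
      have := hRle n
      have := hH n
      linarith
    · have := hdeny n (lt_of_not_ge h)
      linarith
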